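/- Let (P, ≼, ∧, ∨) be a locally finite lattice with least element 0̂, let f be a semimultiplicative complex-valued function on P with f(x) ≠ 0 for all x ∈ P, set g(x) = 1/f(x), and let S = {x_1, …, x_n} be a finite lower closed subset of P with distinct elements, indexed so that x_i ≼ x_j only if i ≤ j. Assume l_i = ∑_{z ≼ x_i, z ⋠ x_j for all j < i} (g_d * μ)(0̂, z) ≠ 0 for all i. Then every [S]_f-eigenvalue λ ∈ ℂ of (S)_f lies in at least one of the n disks {z ∈ ℂ : |z − l_i⁻¹ ∑_{α,β=1}^n μ(x_α, x_i) μ(x_β, x_i) / f(x_α ∨ x_β)| ≤ |l_i|⁻¹ ∑_{j≠i} |∑_{α,β=1}^n μ(x_α, x_i) μ(x_β, x_j) / f(x_α ∨ x_β)|}, i ∈ {1, …, n}. -/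

import Mathlib

open Matrix Finset

section aux
variable {P : Type*} [Lattice P] [OrderBot P] [LocallyFiniteOrder P]
  [DecidableRel ((· ≤ ·) : P → P → Prop)] [DecidableEq P]
  (mu : P → P → ℂ)

lemma aux_mu_sum_Icc (hmu_self : ∀ p, mu p p = 1)
    (hmu_lt : ∀ p q : P, p < q → mu p q = -∑ r ∈ Finset.Ico p q, mu p r)
    {p q : P} (h : p ≤ q) :
    ∑ z ∈ Finset.Icc p q, mu p z = if p = q then 1 else 0 := by
  rcases eq_or_lt_of_le h with rfl | hlt
  · simp [hmu_self]
  · rw [if_neg hlt.ne, ← Finset.Ico_insert_right h,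
      Finset.sum_insert Finset.right_notMem_Ico, hmu_lt p q hlt]
    exact neg_add_cancel _

lemma aux_mobius_inversion (hmu_self : ∀ p, mu p p = 1)
    (hmu_lt : ∀ p q : P, p < q → mu p q = -∑ r ∈ Finset.Ico p q, mu p r)
    (hmu_nle : ∀ p q : P, ¬ p ≤ q → mu p q = 0)
    (h : P → ℂ) (m : P) :
    ∑ z ∈ Finset.Icc ⊥ m, ∑ w ∈ Finset.Icc ⊥ z, h w * mu w z = h m := by
  have step1 : ∀ z ∈ Finset.Icc ⊥ m,
      ∑ w ∈ Finset.Icc ⊥ z, h w * mu w z = ∑ w ∈ Finset.Icc ⊥ m, h w * mu w z := by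
    intro z hz
    refine Finset.sum_subset (Finset.Icc_subset_Icc_right (Finset.mem_Icc.mp hz).2) ?_
    intro w _ hwz
    have hnle : ¬ w ≤ z := fun hle => hwz (Finset.mem_Icc.mpr ⟨bot_le, hle⟩)
    rw [hmu_nle _ _ hnle, mul_zero]
  rw [Finset.sum_congr rfl step1, Finset.sum_comm]
  have step2 : ∀ w ∈ Finset.Icc ⊥ m,
      ∑ z ∈ Finset.Icc ⊥ m, h w * mu w z = h w * (if w = m then 1 else 0) := by
    intro w hw
    rw [← Finset.mul_sum]
    congr 1
    rw [← aux_mu_sum_Icc mu hmu_self hmu_lt (Finset.mem_Icc.mp hw).2]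
    refine (Finset.sum_subset (Finset.Icc_subset_Icc_left bot_le) ?_).symm
    intro z hz hzw
    exact hmu_nle w z fun hle =>
      hzw (Finset.mem_Icc.mpr ⟨hle, (Finset.mem_Icc.mp hz).2⟩)
  rw [Finset.sum_congr rfl step2]
  simp only [mul_ite, mul_one, mul_zero]
  rw [Finset.sum_ite_eq' (Finset.Icc ⊥ m) m h]
  simp

lemma aux_sum_index {n : ℕ} (x : Fin n → P) (hinj : Function.Injective x)
    (hlower : ∀ i (z : P), z ≤ x i → ∃ k, x k = z)
    (h : P → ℂ) {m : P} {i0 : Fin n} (hm : m ≤ x i0) :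
    ∑ k ∈ Finset.univ.filter (fun k => x k ≤ m), h (x k) = ∑ z ∈ Finset.Icc ⊥ m, h z := by
  refine Finset.sum_bij (fun k _ => x k) ?_ ?_ ?_ ?_
  · intro k hk
    exact Finset.mem_Icc.mpr ⟨bot_le, (Finset.mem_filter.mp hk).2⟩
  · intro a _ b _ hab
    exact hinj hab
  · intro z hz
    obtain ⟨k, hk⟩ := hlower i0 z ((Finset.mem_Icc.mp hz).2.trans hm)
    exact ⟨k, Finset.mem_filter.mpr ⟨Finset.mem_univ _, hk ▸ (Finset.mem_Icc.mp hz).2⟩, hk⟩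
  · intro k _
    rfl

lemma aux_meetfact {n : ℕ} (x : Fin n → P) (hinj : Function.Injective x)
    (hlower : ∀ i (z : P), z ≤ x i → ∃ k, x k = z)
    (hmu_self : ∀ p, mu p p = 1)
    (hmu_lt : ∀ p q : P, p < q → mu p q = -∑ r ∈ Finset.Ico p q, mu p r)
    (hmu_nle : ∀ p q : P, ¬ p ≤ q → mu p q = 0)
    (h : P → ℂ) (α β : Fin n) :
    ∑ k : Fin n, (if x k ≤ x α then (1:ℂ) else 0) *
        (∑ w ∈ Finset.Icc ⊥ (x k), h w * mu w (x k)) *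
        (if x k ≤ x β then (1:ℂ) else 0) = h (x α ⊓ x β) := by
  have hterm : ∀ k : Fin n, (if x k ≤ x α then (1:ℂ) else 0) *
      (∑ w ∈ Finset.Icc ⊥ (x k), h w * mu w (x k)) *
      (if x k ≤ x β then (1:ℂ) else 0)
      = if x k ≤ x α ⊓ x β then (∑ w ∈ Finset.Icc ⊥ (x k), h w * mu w (x k)) else 0 := by
    intro k
    by_cases h1 : x k ≤ x α <;> by_cases h2 : x k ≤ x β <;>
      simp [h1, h2, le_inf_iff]
  rw [Finset.sum_congr rfl fun k _ => hterm k, ← Finset.sum_filter]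
  rw [aux_sum_index x hinj hlower
    (fun z => ∑ w ∈ Finset.Icc ⊥ z, h w * mu w z) (inf_le_left (b := x β))]
  exact aux_mobius_inversion mu hmu_self hmu_lt hmu_nle h _

end aux

/-- **Gerschgorin disks.** For lower closed `S`, every `[S]_f`-eigenvalue
`λ` of `(S)_f` lies in one of the `n` disks centred at
`l i⁻¹ ∑_{α,β} μ(x α, x i) μ(x β, x i) / f (x α ∨ x β)` with radius
`|l i|⁻¹ ∑_{j ≠ i} |∑_{α,β} μ(x α, x i) μ(x β, x j) / f (x α ∨ x β)|`. -/
theorem gerschgorin_disks_meet_wrt_join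
    {P : Type*} [Lattice P] [OrderBot P] [LocallyFiniteOrder P]
    [DecidableRel ((· ≤ ·) : P → P → Prop)]
    (mu : P → P → ℂ)
    (hmu_self : ∀ p, mu p p = 1)
    (hmu_lt : ∀ p q : P, p < q → mu p q = -∑ r ∈ Finset.Ico p q, mu p r)
    (hmu_nle : ∀ p q : P, ¬ p ≤ q → mu p q = 0)
    (f : P → ℂ) (hf : ∀ p, f p ≠ 0)
    (hsemi : ∀ p q : P, f (p ⊓ q) * f (p ⊔ q) = f p * f q)
    (g : P → ℂ) (hg : ∀ p, g p = (f p)⁻¹)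
    {n : ℕ} (x : Fin n → P) (hinj : Function.Injective x)
    (hord : ∀ i j, x i ≤ x j → i ≤ j)
    (hlower : ∀ i (z : P), z ≤ x i → ∃ k, x k = z)
    (l : Fin n → ℂ)
    (hl : ∀ i, l i = ∑ z ∈ (Finset.Icc ⊥ (x i)).filter
        (fun z => ∀ j, j < i → ¬ z ≤ x j),
      ∑ w ∈ Finset.Icc ⊥ z, g w * mu w z)
    (hl0 : ∀ i, l i ≠ 0)
    (lam : ℂ) (v : Fin n → ℂ) (hv : v ≠ 0)
    (heig : (Matrix.of fun i j => f (x i ⊓ x j)).mulVec v =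
      lam • (Matrix.of fun i j => f (x i ⊔ x j)).mulVec v) :
    ∃ i : Fin n,
      ‖lam - (l i)⁻¹ * ∑ α : Fin n, ∑ β : Fin n,
          mu (x α) (x i) * mu (x β) (x i) / f (x α ⊔ x β)‖ ≤
        (‖l i‖)⁻¹ * ∑ j ∈ Finset.univ.erase i,
          ‖∑ α : Fin n, ∑ β : Fin n,
            mu (x α) (x i) * mu (x β) (x j) / f (x α ⊔ x β)‖ := by
  classical
  -- Step 1: simplify `l`.
  have hl' : ∀ i, l i = ∑ w ∈ Finset.Icc ⊥ (x i), g w * mu w (x i) := by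
    intro i
    have hset : (Finset.Icc ⊥ (x i)).filter (fun z => ∀ j, j < i → ¬ z ≤ x j)
        = {x i} := by
      ext z
      simp only [Finset.mem_filter, Finset.mem_Icc, Finset.mem_singleton]
      constructor
      · rintro ⟨⟨-, hz⟩, hz2⟩
        obtain ⟨k, rfl⟩ := hlower i z hz
        rcases lt_or_eq_of_le (hord k i hz) with hk | hk
        · exact absurd le_rfl (hz2 k hk)
        · rw [hk]
      · rintro rfl
        exact ⟨⟨bot_le, le_rfl⟩, fun j hj hle => absurd (hord i j hle) (not_le.mpr hj)⟩
    rw [hl i, hset, Finset.sum_singleton]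
  -- Step 2: matrices.
  set Z : Matrix (Fin n) (Fin n) ℂ :=
    Matrix.of (fun i j => if x i ≤ x j then (1:ℂ) else 0) with hZdef
  set U : Matrix (Fin n) (Fin n) ℂ := Matrix.of (fun i j => mu (x i) (x j)) with hUdef
  set A : Matrix (Fin n) (Fin n) ℂ := Matrix.of (fun i j => f (x i ⊓ x j)) with hAdef
  set B : Matrix (Fin n) (Fin n) ℂ := Matrix.of (fun i j => f (x i ⊔ x j)) with hBdef
  set T : Matrix (Fin n) (Fin n) ℂ :=
    Matrix.of (fun i α => mu (x α) (x i) * (f (x α))⁻¹) with hTdef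
  set C : Matrix (Fin n) (Fin n) ℂ := Matrix.of (fun i j => ∑ α : Fin n, ∑ β : Fin n,
    mu (x α) (x i) * mu (x β) (x j) / f (x α ⊔ x β)) with hCdef
  set F : Matrix (Fin n) (Fin n) ℂ := Matrix.diagonal (fun k => f (x k)) with hFdef
  set Fi : Matrix (Fin n) (Fin n) ℂ := Matrix.diagonal (fun k => (f (x k))⁻¹) with hFidef
  set L : Matrix (Fin n) (Fin n) ℂ := Matrix.diagonal l with hLdef
  have hFiF : Fi * F = 1 := by
    rw [hFidef, hFdef, Matrix.diagonal_mul_diagonal]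
    ext i j
    by_cases h : i = j
    · subst h
      simp [Matrix.diagonal_apply_eq, Matrix.one_apply_eq, inv_mul_cancel₀ (hf _)]
    · simp [Matrix.diagonal_apply_ne _ h, Matrix.one_apply_ne h]
  have hUZ : U * Z = 1 := by
    ext i j
    rw [Matrix.mul_apply, Matrix.one_apply]
    simp only [hUdef, hZdef, Matrix.of_apply, mul_ite, mul_one, mul_zero]
    rw [← Finset.sum_filter]
    rw [aux_sum_index x hinj hlower (fun z => mu (x i) z) (le_refl (x j))]
    have hsub : ∑ z ∈ Finset.Icc ⊥ (x j), mu (x i) z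
        = ∑ z ∈ Finset.Icc (x i) (x j), mu (x i) z := by
      refine (Finset.sum_subset (Finset.Icc_subset_Icc_left bot_le) ?_).symm
      intro z hz hzn
      exact hmu_nle _ _ fun hle =>
        hzn (Finset.mem_Icc.mpr ⟨hle, (Finset.mem_Icc.mp hz).2⟩)
    rw [hsub]
    by_cases hij : x i ≤ x j
    · rw [aux_mu_sum_Icc mu hmu_self hmu_lt hij]
      simp [hinj.eq_iff]
    · rw [Finset.Icc_eq_empty hij, Finset.sum_empty,
        if_neg (fun hijeq : i = j => hij (hijeq ▸ le_refl _))]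
  have hZU : Z * U = 1 := mul_eq_one_comm.mp hUZ
  have hUtZt : Uᵀ * Zᵀ = 1 := by
    rw [← Matrix.transpose_mul, hZU, Matrix.transpose_one]
  have hT : T = Uᵀ * Fi := by
    ext i α
    simp [hTdef, hUdef, hFidef, Matrix.mul_diagonal]
  have hTt : Tᵀ = Fi * U := by
    rw [hT, Matrix.transpose_mul, Matrix.transpose_transpose, Matrix.diagonal_transpose]
  -- Step 3: factorization of B.
  have hBfact : B = F * (Zᵀ * L * Z) * F := by
    ext α β
    rw [Matrix.mul_diagonal, Matrix.diagonal_mul]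
    have hmid : (Zᵀ * L * Z) α β = g (x α ⊓ x β) := by
      rw [Matrix.mul_apply]
      simp only [Matrix.mul_diagonal, Matrix.transpose_apply, hZdef, hLdef,
        Matrix.of_apply]
      rw [Finset.sum_congr rfl fun k _ => by rw [hl' k]]
      exact aux_meetfact mu x hinj hlower hmu_self hmu_lt hmu_nle g α β
    rw [hmid, hBdef, Matrix.of_apply, hg]
    have h1 := hsemi (x α) (x β)
    have h2 := hf (x α ⊓ x β)
    field_simp
    linear_combination h1
  -- Step 4: factorization of C.
  have hCfact : C = T * A * Tᵀ := by
    ext i j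
    rw [Matrix.mul_apply]
    simp only [Matrix.mul_apply, Matrix.transpose_apply, hTdef, hAdef, hCdef,
      Matrix.of_apply]
    rw [Finset.sum_comm]
    refine Finset.sum_congr rfl fun β _ => ?_
    rw [Finset.sum_mul]
    refine Finset.sum_congr rfl fun α _ => ?_
    have h1 := hsemi (x α) (x β)
    have h2 := hf (x α)
    have h3 := hf (x β)
    have h4 := hf (x α ⊔ x β)
    field_simp
    linear_combination -(mu (x α) (x i) * mu (x β) (x j)) * h1
  -- Step 5: the transformed eigenvector.
  set w : Fin n → ℂ := Z.mulVec (F.mulVec v) with hwdef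
  have h1 : U.mulVec w = F.mulVec v := by
    rw [hwdef, Matrix.mulVec_mulVec, Matrix.mulVec_mulVec, hUZ, Matrix.one_mul]
  have h3 : Tᵀ.mulVec w = v := by
    rw [hTt, ← Matrix.mulVec_mulVec, h1, Matrix.mulVec_mulVec, hFiF, Matrix.one_mulVec]
  have h5 : B.mulVec v = F.mulVec (Zᵀ.mulVec (L.mulVec w)) := by
    rw [hBfact]
    simp only [← Matrix.mulVec_mulVec, hwdef]
  have h6 : T.mulVec (B.mulVec v) = L.mulVec w := by
    rw [h5, hT]
    simp only [Matrix.mulVec_mulVec, ← Matrix.mul_assoc]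
    rw [Matrix.mul_assoc Uᵀ Fi F, hFiF, Matrix.mul_one, hUtZt, Matrix.one_mul]
  have hveq : C.mulVec w = lam • L.mulVec w := by
    rw [hCfact, ← Matrix.mulVec_mulVec, h3, ← Matrix.mulVec_mulVec, heig,
      Matrix.mulVec_smul, h6]
  -- Step 6: w ≠ 0.
  have hw0 : w ≠ 0 := by
    intro h0
    apply hv
    rw [← h3, h0, Matrix.mulVec_zero]
  -- Step 7: pointwise identity.
  have hpt : ∀ i, ∑ j, C i j * w j = lam * (l i * w i) := by
    intro i
    have := congrFun hveq i
    simpa [Matrix.mulVec, dotProduct, hLdef, Matrix.diagonal_apply, ite_mul,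
      Finset.sum_ite_eq] using this
  -- Step 8: Gershgorin argument.
  obtain ⟨i, -, hmax⟩ := Finset.exists_max_image Finset.univ
    (fun j => ‖w j‖) ⟨⟨0, Nat.pos_of_ne_zero fun h0 => hv (by
      subst h0; exact funext fun i => i.elim0)⟩, Finset.mem_univ _⟩
  have hmax' : ∀ j, ‖w j‖ ≤ ‖w i‖ :=
    fun j => hmax j (Finset.mem_univ j)
  have hwi : w i ≠ 0 := by
    intro h0
    apply hw0
    funext j
    have := hmax' j
    rw [h0, norm_zero] at this
    exact (norm_eq_zero).mp (le_antisymm this (norm_nonneg _))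
  have hwipos : 0 < ‖w i‖ := norm_pos_iff.mpr hwi
  have hlipos : 0 < ‖l i‖ := norm_pos_iff.mpr (hl0 i)
  refine ⟨i, ?_⟩
  have heq : (lam - (l i)⁻¹ * C i i) * (l i * w i)
      = ∑ j ∈ Finset.univ.erase i, C i j * w j := by
    have h7 := hpt i
    rw [← Finset.add_sum_erase _ _ (Finset.mem_univ i)] at h7
    have hli := hl0 i
    have hexp : (lam - (l i)⁻¹ * C i i) * (l i * w i)
        = lam * (l i * w i) - C i i * w i := by
      have hinv : (l i)⁻¹ * l i = 1 := inv_mul_cancel₀ hli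
      linear_combination (-(C i i * w i)) * hinv
    rw [hexp]
    linear_combination -h7
  have habs : ‖lam - (l i)⁻¹ * C i i‖ * (‖l i‖ * ‖w i‖)
      ≤ (∑ j ∈ Finset.univ.erase i, ‖C i j‖) * ‖w i‖ := by
    rw [← norm_mul, ← norm_mul, heq]
    calc ‖∑ j ∈ Finset.univ.erase i, C i j * w j‖
        ≤ ∑ j ∈ Finset.univ.erase i, ‖C i j * w j‖ :=
          norm_sum_le _ _
      _ ≤ ∑ j ∈ Finset.univ.erase i, ‖C i j‖ * ‖w i‖ := by
          refine Finset.sum_le_sum fun j _ => ?_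
          rw [norm_mul]
          exact mul_le_mul_of_nonneg_left (hmax' j) (norm_nonneg _)
      _ = (∑ j ∈ Finset.univ.erase i, ‖C i j‖) * ‖w i‖ := by
          rw [Finset.sum_mul]
  have h8 : ‖lam - (l i)⁻¹ * C i i‖ * ‖l i‖
      ≤ ∑ j ∈ Finset.univ.erase i, ‖C i j‖ := by
    refine le_of_mul_le_mul_right ?_ hwipos
    calc ‖lam - (l i)⁻¹ * C i i‖ * ‖l i‖ * ‖w i‖
        = ‖lam - (l i)⁻¹ * C i i‖ * (‖l i‖ * ‖w i‖) := by
          ring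
      _ ≤ _ := habs
  have hline : ‖l i‖ ≠ 0 := hlipos.ne'
  have hfinal : ‖lam - (l i)⁻¹ * C i i‖
      ≤ (‖l i‖)⁻¹ * ∑ j ∈ Finset.univ.erase i, ‖C i j‖ := by
    calc ‖lam - (l i)⁻¹ * C i i‖
        = (‖l i‖)⁻¹ * (‖lam - (l i)⁻¹ * C i i‖
            * ‖l i‖) := by
          field_simp
      _ ≤ (‖l i‖)⁻¹ * ∑ j ∈ Finset.univ.erase i, ‖C i j‖ :=
          mul_le_mul_of_nonneg_left h8 (inv_nonneg.mpr hlipos.le)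
  simpa only [hCdef, Matrix.of_apply] using hfinal
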